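/- The real-valued function x ↦ exp( −3·(1 − 1/√(3x)) / (1 + √3/√x + 1/x) ) · (2 + √(3/x))² is monotone decreasing for x > 0, and for all x ≥ 27 its value is at most exp(−3·(1 − 1/9)/(1 + 1/3 + 1/27))·(2 + 1/3)² = (49/9)·e^{−72/37}. -/

import Mathlib

open Real

noncomputable def hfun (s : ℝ) : ℝ :=
  Real.exp (-3 * (3 - s) / (s ^ 2 + 3 * s + 3)) * (2 + s) ^ 2

lemma qpos (s : ℝ) : 0 < s ^ 2 + 3 * s + 3 := by nlinarith [sq_nonneg (s + 3 / 2)]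

lemma hfun_hasDeriv (s : ℝ) :
    HasDerivAt hfun
      (Real.exp (-3 * (3 - s) / (s ^ 2 + 3 * s + 3)) *
          ((3 * (s ^ 2 + 3 * s + 3) - -3 * (3 - s) * (2 * s + 3)) / (s ^ 2 + 3 * s + 3) ^ 2) *
          (2 + s) ^ 2
        + Real.exp (-3 * (3 - s) / (s ^ 2 + 3 * s + 3)) * (2 * (2 + s))) s := by
  have hq : s ^ 2 + 3 * s + 3 ≠ 0 := (qpos s).ne'
  have hp : HasDerivAt (fun s : ℝ => -3 * (3 - s)) 3 s := by
    have := ((hasDerivAt_id s).const_sub 3).const_mul (-3 : ℝ)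
    simpa using this
  have hqd : HasDerivAt (fun s : ℝ => s ^ 2 + 3 * s + 3) (2 * s + 3) s := by
    have h1 : HasDerivAt (fun s : ℝ => s ^ 2) (2 * s) s := by
      simpa using (hasDerivAt_pow 2 s)
    have h2 : HasDerivAt (fun s : ℝ => 3 * s) 3 s := by
      simpa using (hasDerivAt_id s).const_mul (3 : ℝ)
    simpa using (h1.add h2).add_const 3
  have hu : HasDerivAt (fun s : ℝ => -3 * (3 - s) / (s ^ 2 + 3 * s + 3))
      ((3 * (s ^ 2 + 3 * s + 3) - -3 * (3 - s) * (2 * s + 3)) / (s ^ 2 + 3 * s + 3) ^ 2) s :=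
    hp.div hqd hq
  have he := hu.exp
  have hv : HasDerivAt (fun s : ℝ => (2 + s) ^ 2) (2 * (2 + s)) s := by
    have h1 : HasDerivAt (fun s : ℝ => 2 + s) 1 s := (hasDerivAt_id s).const_add 2
    simpa using h1.fun_pow 2
  exact he.mul hv

lemma hfun_mono : MonotoneOn hfun (Set.Ici 0) := by
  have hdiff : ∀ s : ℝ, DifferentiableAt ℝ hfun s := fun s => (hfun_hasDeriv s).differentiableAt
  apply monotoneOn_of_deriv_nonneg (convex_Ici 0)
  · exact fun s _ => (hdiff s).continuousAt.continuousWithinAt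
  · exact fun s _ => (hdiff s).differentiableWithinAt
  · intro s hs
    rw [interior_Ici] at hs
    have hs0 : (0 : ℝ) ≤ s := le_of_lt hs
    rw [(hfun_hasDeriv s).deriv]
    have hq : (0 : ℝ) < s ^ 2 + 3 * s + 3 := qpos s
    have he : (0 : ℝ) < Real.exp (-3 * (3 - s) / (s ^ 2 + 3 * s + 3)) := Real.exp_pos _
    have key : (0 : ℝ) ≤
        (3 * (s ^ 2 + 3 * s + 3) - -3 * (3 - s) * (2 * s + 3)) / (s ^ 2 + 3 * s + 3) ^ 2 *
          (2 + s) ^ 2 + 2 * (2 + s) := by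
      rw [div_mul_eq_mul_div]
      have heq : (3 * (s ^ 2 + 3 * s + 3) - -3 * (3 - s) * (2 * s + 3)) * (2 + s) ^ 2 /
            (s ^ 2 + 3 * s + 3) ^ 2 + 2 * (2 + s)
          = ((3 * (s ^ 2 + 3 * s + 3) - -3 * (3 - s) * (2 * s + 3)) * (2 + s) ^ 2
              + 2 * (2 + s) * (s ^ 2 + 3 * s + 3) ^ 2) / (s ^ 2 + 3 * s + 3) ^ 2 := by
        field_simp
      rw [heq]
      apply div_nonneg _ (by positivity)
      nlinarith [pow_nonneg hs0 5, pow_nonneg hs0 4, pow_nonneg hs0 3, pow_nonneg hs0 2, hs0]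
    calc (0:ℝ) ≤ Real.exp (-3 * (3 - s) / (s ^ 2 + 3 * s + 3)) *
        ((3 * (s ^ 2 + 3 * s + 3) - -3 * (3 - s) * (2 * s + 3)) / (s ^ 2 + 3 * s + 3) ^ 2 *
          (2 + s) ^ 2 + 2 * (2 + s)) := by positivity
      _ = _ := by ring

lemma feq (x : ℝ) (hx : 0 < x) :
    Real.exp (-3 * (1 - 1 / Real.sqrt (3 * x)) / (1 + Real.sqrt 3 / Real.sqrt x + 1 / x))
      * (2 + Real.sqrt (3 / x)) ^ 2 = hfun (Real.sqrt (3 / x)) := by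
  have hx3 : (0:ℝ) < 3 / x := by positivity
  set s := Real.sqrt (3 / x) with hsdef
  have hs0 : 0 < s := Real.sqrt_pos.2 hx3
  have hs2 : s ^ 2 = 3 / x := Real.sq_sqrt hx3.le
  have h1 : Real.sqrt 3 / Real.sqrt x = s := (Real.sqrt_div (by norm_num) x).symm
  have hsx : Real.sqrt x ≠ 0 := (Real.sqrt_pos.2 hx).ne'
  have h33 : Real.sqrt 3 * Real.sqrt 3 = 3 := Real.mul_self_sqrt (by norm_num)
  have h2 : 1 / Real.sqrt (3 * x) = s / 3 := by
    rw [Real.sqrt_mul (by norm_num : (0:ℝ) ≤ 3), ← h1]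
    rw [div_eq_div_iff (by positivity) (by norm_num)]
    field_simp
    nlinarith [h33, Real.sq_sqrt hx.le, Real.sqrt_pos.2 hx]
  have h3 : 1 / x = s ^ 2 / 3 := by rw [hs2]; field_simp
  rw [h1, h2, h3, hfun]
  congr 2
  rw [div_eq_div_iff (by nlinarith [sq_nonneg s, hs0]) (qpos s).ne']
  ring

theorem bound_function_antitone_and_value :
    AntitoneOn
      (fun x : ℝ => Real.exp (-3 * (1 - 1 / Real.sqrt (3 * x))
          / (1 + Real.sqrt 3 / Real.sqrt x + 1 / x)) * (2 + Real.sqrt (3 / x)) ^ 2)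
      (Set.Ioi (0 : ℝ))
    ∧ Real.exp (-3 * (1 - 1 / 9) / (1 + 1 / 3 + 1 / 27)) * ((2 : ℝ) + 1 / 3) ^ 2
        = 49 / 9 * Real.exp (-72 / 37)
    ∧ ∀ x : ℝ, 27 ≤ x →
        Real.exp (-3 * (1 - 1 / Real.sqrt (3 * x))
            / (1 + Real.sqrt 3 / Real.sqrt x + 1 / x)) * (2 + Real.sqrt (3 / x)) ^ 2
          ≤ 49 / 9 * Real.exp (-72 / 37) := by
  have hanti : AntitoneOn
      (fun x : ℝ => Real.exp (-3 * (1 - 1 / Real.sqrt (3 * x))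
          / (1 + Real.sqrt 3 / Real.sqrt x + 1 / x)) * (2 + Real.sqrt (3 / x)) ^ 2)
      (Set.Ioi (0 : ℝ)) := by
    intro x hx y hy hxy
    simp only [Set.mem_Ioi] at hx hy
    simp only
    rw [feq x hx, feq y hy]
    apply hfun_mono (Real.sqrt_nonneg _) (Real.sqrt_nonneg _)
    apply Real.sqrt_le_sqrt
    gcongr
  have hval : Real.exp (-3 * (1 - 1 / 9) / (1 + 1 / 3 + 1 / 27)) * ((2 : ℝ) + 1 / 3) ^ 2
      = 49 / 9 * Real.exp (-72 / 37) := by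
    have harg : (-3 * (1 - 1 / 9) / (1 + 1 / 3 + 1 / 27) : ℝ) = -72 / 37 := by norm_num
    rw [harg]
    norm_num
    ring
  refine ⟨hanti, hval, ?_⟩
  intro x hx
  have hx0 : (0:ℝ) < x := by linarith
  have h27 := hanti (show (27:ℝ) ∈ Set.Ioi 0 by norm_num) (Set.mem_Ioi.2 hx0) hx
  refine le_trans h27 ?_
  beta_reduce
  have hs27 : Real.sqrt (3 / 27) = 1 / 3 := by
    rw [show (3 / 27 : ℝ) = (1 / 3) ^ 2 by norm_num, Real.sqrt_sq (by norm_num)]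
  rw [feq 27 (by norm_num), hs27, hfun]
  rw [show (-3 * (3 - 1 / 3) / ((1 / 3) ^ 2 + 3 * (1 / 3) + 3) : ℝ) = -72 / 37 by norm_num]
  rw [show ((2 : ℝ) + 1 / 3) ^ 2 = 49 / 9 by norm_num]
  linarith [Real.exp_pos (-72 / 37 : ℝ)]
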